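/- Let X be a real-valued random variable with finite mean whose law has a density f with respect to Lebesgue measure satisfying f ≤ M almost everywhere for a constant M > 0, and let U be a random variable uniformly distributed on the interval [−1/(2M), 1/(2M)]. Then for every convex function φ : ℝ → ℝ for which both expectations are finite, E[φ(U)] ≤ E[φ(X − E[X])]. -/

import Mathlib

open MeasureTheory ProbabilityTheory Set

/-- If `X` has density `f ≤ M` a.e. (w.r.t. Lebesgue) and `U` is uniform on
`[-1/(2M), 1/(2M)]`, then `E[φ(U)] ≤ E[φ(X - E X)]` for every convex `φ` with
both expectations finite. -/
theorem uniform_convex_minorant_of_bounded_density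
    {Ω Ω' : Type*} [MeasurableSpace Ω] [MeasurableSpace Ω']
    (P : Measure Ω) (P' : Measure Ω')
    [IsProbabilityMeasure P] [IsProbabilityMeasure P']
    (X : Ω → ℝ) (U : Ω' → ℝ) (hX : AEMeasurable X P) (hU : AEMeasurable U P')
    (f : ℝ → ℝ) (hf : ∀ x, 0 ≤ f x)
    (M : ℝ) (hM : 0 < M)
    (hfM : ∀ᵐ x ∂(volume : Measure ℝ), f x ≤ M)
    (hmapX : Measure.map X P = volume.withDensity (fun x => ENNReal.ofReal (f x)))
    (hmapU : Measure.map U P' = volume.withDensity (fun x =>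
      ENNReal.ofReal (Set.indicator (Set.Icc (-(1 / (2 * M))) (1 / (2 * M))) (fun _ => M) x)))
    (hint : Integrable X P)
    (φ : ℝ → ℝ) (hφ : ConvexOn ℝ Set.univ φ)
    (hφU : Integrable (fun ω => φ (U ω)) P')
    (hφX : Integrable (fun ω => φ (X ω - ∫ ω', X ω' ∂P)) P) :
    (∫ ω, φ (U ω) ∂P') ≤ ∫ ω, φ (X ω - ∫ ω', X ω' ∂P) ∂P := by
  set m : ℝ := ∫ ω', X ω' ∂P with hm
  set a : ℝ := 1 / (2 * M) with ha
  have ha0 : 0 < a := by positivity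
  have h2a : (0:ℝ) < 2 * a := by linarith
  set I : Set ℝ := Icc (-a) a with hIdef
  have hImeas : MeasurableSet I := measurableSet_Icc
  -- the pushforward measures
  have hXm : AEMeasurable (fun ω => X ω - m) P := hX.sub aemeasurable_const
  set μ : Measure ℝ := Measure.map U P' with hμdef
  set ν : Measure ℝ := Measure.map (fun ω => X ω - m) P with hνdef
  haveI hμprob : IsProbabilityMeasure μ := Measure.isProbabilityMeasure_map hU
  haveI hνprob : IsProbabilityMeasure ν := Measure.isProbabilityMeasure_map hXm
  -- continuity of φ
  have hφc : Continuous φ := by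
    have h1 := hφ.continuousOn_interior
    rw [interior_univ] at h1
    exact continuousOn_univ.mp h1
  -- transfer integrals
  have hUint : ∫ ω, φ (U ω) ∂P' = ∫ x, φ x ∂μ :=
    (integral_map hU hφc.aestronglyMeasurable).symm
  have hXint : ∫ ω, φ (X ω - m) ∂P = ∫ x, φ x ∂ν :=
    (integral_map hXm hφc.aestronglyMeasurable).symm
  rw [hUint, hXint]
  -- integrability transfers
  have hφμ : Integrable φ μ :=
    (integrable_map_measure hφc.aestronglyMeasurable hU).mpr hφU
  have hφν : Integrable φ ν :=
    (integrable_map_measure hφc.aestronglyMeasurable hXm).mpr hφX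
  -- μ lives on I
  have hμI : μ Iᶜ = 0 := by
    rw [hmapU, withDensity_apply _ hImeas.compl]
    have : ∫⁻ x in Iᶜ, ENNReal.ofReal (Set.indicator I (fun _ => M) x) ∂volume
        = ∫⁻ x in Iᶜ, (0 : ENNReal) ∂volume := by
      refine setLIntegral_congr_fun hImeas.compl (fun x hx => ?_)
      rw [Set.indicator_of_notMem hx]
      simp
    rw [this, lintegral_zero]
  have hμae : ∀ᵐ x ∂μ, x ∈ I :=
    Filter.eventually_iff.mpr (mem_ae_iff.mpr (by simpa using hμI))
  -- identity integrable under μ and ν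
  have hidμ : Integrable (fun x : ℝ => x) μ := by
    refine Integrable.mono' (integrable_const a) aestronglyMeasurable_id ?_
    filter_upwards [hμae] with x hx
    rw [Real.norm_eq_abs]
    exact abs_le.mpr (Set.mem_Icc.mp hx)
  have hidν : Integrable (fun x : ℝ => x) ν := by
    have := (integrable_map_measure aestronglyMeasurable_id hXm).mpr
      (hint.sub (integrable_const m))
    exact this
  -- mean of ν is 0
  have hmeanν : ∫ x, x ∂ν = 0 := by
    have h1 : ∫ x, x ∂ν = ∫ ω, (X ω - m) ∂P := by
      rw [hνdef]
      exact integral_map hXm measurable_id.aestronglyMeasurable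
    rw [h1, integral_sub hint (integrable_const m), integral_const, probReal_univ,
      one_smul, ← hm, sub_self]
  -- mean of μ is 0
  have hmeanμ : ∫ x, x ∂μ = 0 := by
    have hdm : Measurable (fun x : ℝ => (Set.indicator I (fun _ => M) x).toNNReal) :=
      (measurable_const.indicator hImeas).real_toNNReal
    rw [hmapU]
    have hrw : (fun x : ℝ => ENNReal.ofReal (Set.indicator I (fun _ => M) x))
        = fun x : ℝ => ((Set.indicator I (fun _ => M) x).toNNReal : ENNReal) := rfl
    rw [hrw, integral_withDensity_eq_integral_smul hdm]
    have : (fun x : ℝ => (Set.indicator I (fun _ => M) x).toNNReal • x)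
        = Set.indicator I (fun y : ℝ => M * y) := by
      funext x
      by_cases hx : x ∈ I
      · rw [Set.indicator_of_mem hx, Set.indicator_of_mem hx]
        simp [NNReal.smul_def, Real.coe_toNNReal _ hM.le]
      · rw [Set.indicator_of_notMem hx, Set.indicator_of_notMem hx]
        simp
    rw [this, integral_indicator hImeas, hIdef, integral_Icc_eq_integral_Ioc,
      ← intervalIntegral.integral_of_le (by linarith : -a ≤ a)]
    rw [intervalIntegral.integral_const_mul, integral_id]
    simp [neg_sq]
  -- the chord of φ over I
  set α : ℝ := (φ a - φ (-a)) / (2 * a) with hαdef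
  have hα2a : α * (2 * a) = φ a - φ (-a) := div_mul_cancel₀ _ (ne_of_gt h2a)
  set β : ℝ := α * a + φ (-a) with hβdef
  set L : ℝ → ℝ := fun x => α * x + β with hLdef
  have hLa : L a = φ a := by
    simp only [hLdef, hβdef]
    linear_combination hα2a
  have hLna : L (-a) = φ (-a) := by
    simp only [hLdef, hβdef]; ring
  -- φ ≤ L on I
  have hle_I : ∀ x ∈ I, φ x ≤ L x := by
    intro x hx
    rcases eq_or_lt_of_le hx.1 with h1 | h1
    · rw [← h1, hLna]
    rcases eq_or_lt_of_le hx.2 with h2 | h2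
    · rw [h2, hLa]
    have key := hφ.secant_mono_aux1 (mem_univ (-a)) (mem_univ a) h1 h2
    have hexp : 2 * a * (L x) = (a - x) * φ (-a) + (x - -a) * φ a := by
      simp only [hLdef, hβdef]
      linear_combination (x + a) * hα2a
    nlinarith [key, hexp, h2a]
  -- φ ≥ L outside I
  have hge_out : ∀ x ∉ I, L x ≤ φ x := by
    intro x hx
    rw [hIdef, Set.mem_Icc, not_and_or, not_le, not_le] at hx
    rcases hx with hx | hx
    · -- x < -a, use x < -a < a
      have key := hφ.secant_mono_aux1 (mem_univ x) (mem_univ a) hx (by linarith)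
      have hexp : 2 * a * (L x) = (a - x) * φ (-a) - (-a - x) * φ a := by
        simp only [hLdef, hβdef]
        linear_combination (x + a) * hα2a
      nlinarith [key, hexp, h2a]
    · -- a < x, use -a < a < x
      have key := hφ.secant_mono_aux1 (mem_univ (-a)) (mem_univ x) (by linarith) hx
      have hexp : 2 * a * (L x) = (x - -a) * φ a - (x - a) * φ (-a) := by
        simp only [hLdef, hβdef]
        linear_combination (x + a) * hα2a
      nlinarith [key, hexp, h2a]
  -- L is integrable under both measures and has the same integral
  have hLμ : Integrable L μ := by
    have := (hidμ.const_mul α).add (integrable_const β)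
    exact this
  have hLν : Integrable L ν := by
    have := (hidν.const_mul α).add (integrable_const β)
    exact this
  have hLint : ∫ x, L x ∂μ = ∫ x, L x ∂ν := by
    simp only [hLdef]
    rw [integral_add (hidμ.const_mul α) (integrable_const β),
      integral_add (hidν.const_mul α) (integrable_const β),
      integral_const_mul, integral_const_mul, hmeanμ, hmeanν]
    simp [measure_univ]
  -- ν.restrict I ≤ μ.restrict I
  have hres : ν.restrict I ≤ μ.restrict I := by
    rw [Measure.le_iff]
    intro s hs
    rw [Measure.restrict_apply hs, Measure.restrict_apply hs]
    have hsImeas : MeasurableSet (s ∩ I) := hs.inter hImeas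
    -- bound ν (s ∩ I)
    have hνmap : ν = Measure.map (fun x : ℝ => x - m)
        (volume.withDensity (fun x => ENNReal.ofReal (f x))) := by
      have hgm : Measurable (fun x : ℝ => x - m) := measurable_id'.sub_const m
      rw [hνdef, ← hmapX, AEMeasurable.map_map_of_aemeasurable hgm.aemeasurable hX]
      rfl
    have hν_le : ν (s ∩ I) ≤ ENNReal.ofReal M * volume (s ∩ I) := by
      have hgm : Measurable (fun x : ℝ => x - m) := measurable_id'.sub_const m
      rw [hνmap, Measure.map_apply hgm hsImeas,
        withDensity_apply _ (hgm hsImeas)]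
      have hb : ∫⁻ x in (fun x : ℝ => x - m) ⁻¹' (s ∩ I), ENNReal.ofReal (f x) ∂volume
          ≤ ∫⁻ x in (fun x : ℝ => x - m) ⁻¹' (s ∩ I), ENNReal.ofReal M ∂volume := by
        refine lintegral_mono_ae ?_
        filter_upwards [ae_restrict_of_ae hfM] with x hx
        exact ENNReal.ofReal_le_ofReal hx
      refine hb.trans ?_
      rw [setLIntegral_const]
      have hvol : volume ((fun x : ℝ => x - m) ⁻¹' (s ∩ I)) = volume (s ∩ I) :=
        (measurePreserving_sub_right volume m).measure_preimage
          hsImeas.nullMeasurableSet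
      rw [hvol]
    -- compute μ (s ∩ I)
    have hμ_eq : μ (s ∩ I) = ENNReal.ofReal M * volume (s ∩ I) := by
      rw [hmapU, withDensity_apply _ hsImeas]
      have : ∫⁻ x in s ∩ I, ENNReal.ofReal (Set.indicator I (fun _ => M) x) ∂volume
          = ∫⁻ x in s ∩ I, ENNReal.ofReal M ∂volume := by
        refine setLIntegral_congr_fun hsImeas (fun x hx => ?_)
        rw [Set.indicator_of_mem hx.2]
      rw [this, setLIntegral_const]
    rw [hμ_eq]
    exact hν_le
  -- now the main estimate with ψ = φ - L
  set ψ : ℝ → ℝ := fun x => φ x - L x with hψdef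
  have hψμ : Integrable ψ μ := hφμ.sub hLμ
  have hψν : Integrable ψ ν := hφν.sub hLν
  -- compare set integrals on I
  have hI_cmp : ∫ x in I, ψ x ∂μ ≤ ∫ x in I, ψ x ∂ν := by
    have hneg : ∫ x in I, -ψ x ∂ν ≤ ∫ x in I, -ψ x ∂μ := by
      refine integral_mono_measure hres ?_ (hψμ.restrict.neg)
      rw [Filter.EventuallyLE, ae_restrict_iff' hImeas]
      refine ae_of_all _ fun x hx => ?_
      simp only [hψdef, Pi.zero_apply, neg_sub]
      exact sub_nonneg.mpr (hle_I x hx)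
    have h1 : ∫ x in I, -ψ x ∂ν = -∫ x in I, ψ x ∂ν := integral_neg _
    have h2 : ∫ x in I, -ψ x ∂μ = -∫ x in I, ψ x ∂μ := integral_neg _
    rw [h1, h2] at hneg
    linarith
  -- split integrals
  have hsplitμ : ∫ x, ψ x ∂μ = ∫ x in I, ψ x ∂μ := by
    have := integral_add_compl hImeas hψμ
    have hz : ∫ x in Iᶜ, ψ x ∂μ = 0 := by
      have : μ.restrict Iᶜ = 0 := Measure.restrict_eq_zero.mpr hμI
      rw [this]; exact integral_zero_measure _
    linarith
  have hsplitν : ∫ x in I, ψ x ∂ν ≤ ∫ x, ψ x ∂ν := by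
    have hsum := integral_add_compl hImeas hψν
    have hpos : 0 ≤ ∫ x in Iᶜ, ψ x ∂ν := by
      refine integral_nonneg_of_ae ?_
      rw [Filter.EventuallyLE, ae_restrict_iff' hImeas.compl]
      refine ae_of_all _ fun x hx => ?_
      simp only [hψdef]
      exact sub_nonneg.mpr (hge_out x hx)
    linarith
  -- conclude
  have hψcmp : ∫ x, ψ x ∂μ ≤ ∫ x, ψ x ∂ν := by
    rw [hsplitμ]
    exact hI_cmp.trans hsplitν
  have hμeq : ∫ x, ψ x ∂μ = ∫ x, φ x ∂μ - ∫ x, L x ∂μ := integral_sub hφμ hLμ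
  have hνeq : ∫ x, ψ x ∂ν = ∫ x, φ x ∂ν - ∫ x, L x ∂ν := integral_sub hφν hLν
  rw [hμeq, hνeq, hLint] at hψcmp
  linarith
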